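/- For all m ≥ 0, the prefix of length k_{m+6} − 2 of T_{m+3} equals the prefix of length k_{m+6} − 2 of the word T_{m+1} T_m T_{m+1}. -/
import Mathlib


/-- Tribonacci numbers, index-shifted so that `trib n` represents t_{n-2}:
`trib 0 = t₋₂ = 0`, `trib 1 = t₋₁ = 1`, `trib 2 = t₀ = 1`, and
`trib (n+3) = trib (n+2) + trib (n+1) + trib n`. -/
def trib : ℕ → ℕ
  | 0 => 0
  | 1 => 1
  | 2 => 1
  | n + 3 => trib (n + 2) + trib (n + 1) + trib n

/-- Kernel numbers: k₀ = 0, k₁ = k₂ = 1, k_m = k_{m-1} + k_{m-2} + k_{m-3} - 1 for m ≥ 3. -/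
def ker : ℕ → ℕ
  | 0 => 0
  | 1 => 1
  | 2 => 1
  | n + 3 => ker (n + 2) + ker (n + 1) + ker n - 1

/-- The three-letter alphabet {a, b, c}. -/
inductive Alpha | a | b | c
  deriving DecidableEq, Repr

/-- The Tribonacci substitution σ(a) = ab, σ(b) = ac, σ(c) = a. -/
def sub : Alpha → List Alpha
  | .a => [.a, .b]
  | .b => [.a, .c]
  | .c => [.a]

/-- T_m = σ^m(a). -/
def T (m : ℕ) : List Alpha := (fun w => w.flatMap sub)^[m] [.a]

/-! ### Auxiliary definitions -/

/-- One application of the substitution to a word. -/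
def sig (w : List Alpha) : List Alpha := w.flatMap sub

lemma sig_cons (x : Alpha) (t : List Alpha) : sig (x :: t) = sub x ++ sig t := rfl

lemma sig_append (u v : List Alpha) : sig (u ++ v) = sig u ++ sig v :=
  List.flatMap_append ..

lemma T_succ (n : ℕ) : T (n + 1) = sig (T n) := by
  show (fun w => w.flatMap sub)^[n + 1] [.a] = sig ((fun w => w.flatMap sub)^[n] [.a])
  rw [Function.iterate_succ_apply']
  rfl

/-- `B n = σ^n(b)`. -/
def B (n : ℕ) : List Alpha := (fun w => w.flatMap sub)^[n] [.b]

/-- `C n = σ^n(c)`. -/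
def C (n : ℕ) : List Alpha := (fun w => w.flatMap sub)^[n] [.c]

lemma iter_append (n : ℕ) (u v : List Alpha) :
    (fun w => w.flatMap sub)^[n] (u ++ v) =
      (fun w => w.flatMap sub)^[n] u ++ (fun w => w.flatMap sub)^[n] v := by
  induction n generalizing u v with
  | zero => rfl
  | succ n ih =>
    simp only [Function.iterate_succ_apply]
    rw [show (u ++ v).flatMap sub = u.flatMap sub ++ v.flatMap sub from List.flatMap_append ..]
    exact ih _ _

lemma T_succ_eq (n : ℕ) : T (n + 1) = T n ++ B n := by
  have h : T (n + 1) = (fun w => w.flatMap sub)^[n] ([Alpha.a] ++ [Alpha.b]) := by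
    show (fun w => w.flatMap sub)^[n+1] [Alpha.a] = _
    rw [Function.iterate_succ_apply]
    rfl
  rw [h, iter_append]; rfl

lemma B_succ_eq (n : ℕ) : B (n + 1) = T n ++ C n := by
  have h : B (n + 1) = (fun w => w.flatMap sub)^[n] ([Alpha.a] ++ [Alpha.c]) := by
    show (fun w => w.flatMap sub)^[n+1] [Alpha.b] = _
    rw [Function.iterate_succ_apply]
    rfl
  rw [h, iter_append]; rfl

lemma C_succ_eq (n : ℕ) : C (n + 1) = T n := by
  show (fun w => w.flatMap sub)^[n+1] [Alpha.c] = _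
  rw [Function.iterate_succ_apply]
  rfl

lemma T_rec (n : ℕ) : T (n + 3) = T (n + 2) ++ T (n + 1) ++ T n := by
  rw [show T (n + 3) = T (n + 2) ++ B (n + 2) from T_succ_eq (n + 2),
    B_succ_eq (n + 1), C_succ_eq n, List.append_assoc]

/-! ### Lengths and counts -/

lemma length_T (n : ℕ) : (T n).length = trib (n + 2) := by
  have key : ∀ n, (T n).length = trib (n + 2) ∧ (T (n+1)).length = trib (n + 3) ∧
      (T (n+2)).length = trib (n + 4) := by
    intro n
    induction n with
    | zero => refine ⟨rfl, rfl, rfl⟩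
    | succ n ih =>
      obtain ⟨h0, h1, h2⟩ := ih
      refine ⟨h1, h2, ?_⟩
      show (T (n + 3)).length = trib (n + 5)
      rw [T_rec, List.length_append, List.length_append, h0, h1, h2]
      have : trib (n + 5) = trib (n + 4) + trib (n + 3) + trib (n + 2) := rfl
      omega
  exact (key n).1

lemma length_eq_counts (w : List Alpha) :
    w.length = w.count .a + w.count .b + w.count .c := by
  induction w with
  | nil => rfl
  | cons x t ih =>
    cases x <;> simp [List.count_cons, ih] <;> omega

lemma count_sub_a (x : Alpha) : (sub x).count .a = 1 := by cases x <;> rfl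
lemma count_sub_b (x : Alpha) : (sub x).count .b = (if x = .a then 1 else 0) := by
  cases x <;> rfl
lemma count_sub_c (x : Alpha) : (sub x).count .c = (if x = .b then 1 else 0) := by
  cases x <;> rfl

lemma count_sig_a (w : List Alpha) : (sig w).count .a = w.length := by
  induction w with
  | nil => rfl
  | cons x t ih =>
    rw [sig_cons, List.count_append, ih, count_sub_a, List.length_cons]
    omega

lemma count_sig_b (w : List Alpha) : (sig w).count .b = w.count .a := by
  induction w with
  | nil => rfl
  | cons x t ih =>
    rw [sig_cons, List.count_append, ih, count_sub_b, List.count_cons]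
    cases x <;> simp <;> omega

lemma count_sig_c (w : List Alpha) : (sig w).count .c = w.count .b := by
  induction w with
  | nil => rfl
  | cons x t ih =>
    rw [sig_cons, List.count_append, ih, count_sub_c, List.count_cons]
    cases x <;> simp <;> omega

/-! ### Kernel prefix words -/

/-- The kernel prefix words: `Q 0 = aba`, `Q (m+1) = σ(Q m) ++ [a]`. -/
def Q : ℕ → List Alpha
  | 0 => [.a, .b, .a]
  | m + 1 => sig (Q m) ++ [.a]

lemma Q_counts (m : ℕ) :
    (Q m).count .a + 1 = ker (m + 5) ∧ (Q m).count .b + 1 = ker (m + 4) ∧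
      (Q m).count .c + 1 = ker (m + 3) := by
  induction m with
  | zero => refine ⟨rfl, rfl, rfl⟩
  | succ m ih =>
    obtain ⟨ha, hb, hc⟩ := ih
    have hlen := length_eq_counts (Q m)
    have hker : ker (m + 6) = ker (m + 5) + ker (m + 4) + ker (m + 3) - 1 := rfl
    refine ⟨?_, ?_, ?_⟩
    · show (sig (Q m) ++ [Alpha.a]).count .a + 1 = ker (m + 6)
      rw [List.count_append, count_sig_a,
        show List.count Alpha.a [Alpha.a] = 1 from rfl]
      omega
    · show (sig (Q m) ++ [Alpha.a]).count .b + 1 = ker (m + 5)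
      rw [List.count_append, count_sig_b]
      simpa using ha
    · show (sig (Q m) ++ [Alpha.a]).count .c + 1 = ker (m + 4)
      rw [List.count_append, count_sig_c]
      simpa using hb

lemma length_Q (m : ℕ) : (Q m).length + 2 = ker (m + 6) := by
  obtain ⟨ha, hb, hc⟩ := Q_counts m
  have hlen := length_eq_counts (Q m)
  have hker : ker (m + 6) = ker (m + 5) + ker (m + 4) + ker (m + 3) - 1 := rfl
  omega

/-! ### Arithmetic inequalities -/

lemma ker_pos (n : ℕ) : 1 ≤ ker (n + 1) := by
  have key : ∀ n, 1 ≤ ker (n + 1) ∧ 1 ≤ ker (n + 2) := by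
    intro n
    induction n with
    | zero => exact ⟨le_refl 1, le_refl 1⟩
    | succ n ih =>
      obtain ⟨h1, h2⟩ := ih
      refine ⟨h2, ?_⟩
      show 1 ≤ ker (n + 3)
      have : ker (n + 3) = ker (n + 2) + ker (n + 1) + ker n - 1 := rfl
      omega
  exact (key n).1

/-- `ker (m+6) ≤ 2·trib (m+3) + trib (m+2) + 1`, i.e. the kernel prefix fits strictly
inside `T (m+1) ++ T m ++ T (m+1)`. -/
lemma ker_le_W (m : ℕ) : ker (m + 6) ≤ 2 * trib (m + 3) + trib (m + 2) + 1 := by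
  have key : ∀ m, ker (m + 6) + 1 ≤ 2 * trib (m + 3) + trib (m + 2) + 2 ∧
      ker (m + 7) + 2 ≤ 2 * trib (m + 4) + trib (m + 3) + 2 ∧
      ker (m + 8) + 3 ≤ 2 * trib (m + 5) + trib (m + 4) + 2 := by
    intro m
    induction m with
    | zero => refine ⟨by decide, by decide, by decide⟩
    | succ m ih =>
      obtain ⟨h0, h1, h2⟩ := ih
      refine ⟨?_, ?_, ?_⟩
      · show ker (m + 7) + 1 ≤ 2 * trib (m + 4) + trib (m + 3) + 2
        omega
      · show ker (m + 8) + 2 ≤ 2 * trib (m + 5) + trib (m + 4) + 2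
        omega
      · show ker (m + 9) + 3 ≤ 2 * trib (m + 6) + trib (m + 5) + 2
        have hk : ker (m + 9) = ker (m + 8) + ker (m + 7) + ker (m + 6) - 1 := rfl
        have ht6 : trib (m + 6) = trib (m + 5) + trib (m + 4) + trib (m + 3) := rfl
        have ht5 : trib (m + 5) = trib (m + 4) + trib (m + 3) + trib (m + 2) := rfl
        omega
  exact Nat.le_of_succ_le_succ (key m).1

lemma trib_mono (n : ℕ) : trib n ≤ trib (n + 1) := by
  match n with
  | 0 => exact Nat.zero_le _
  | 1 => exact le_refl 1
  | n + 2 =>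
    show trib (n + 2) ≤ trib (n + 3)
    have : trib (n + 3) = trib (n + 2) + trib (n + 1) + trib n := rfl
    omega

/-- The kernel prefix also fits strictly inside `T (m+3)`. -/
lemma ker_le_T (m : ℕ) : ker (m + 6) ≤ trib (m + 5) + 1 := by
  have h1 := ker_le_W m
  have ht5 : trib (m + 5) = trib (m + 4) + trib (m + 3) + trib (m + 2) := rfl
  have h2 : trib (m + 3) ≤ trib (m + 4) := trib_mono (m + 3)
  omega

/-! ### Prefix machinery -/

lemma sig_prefix {u v : List Alpha} (h : u <+: v) : sig u <+: sig v := by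
  obtain ⟨r, rfl⟩ := h
  rw [sig_append]
  exact ⟨sig r, rfl⟩

lemma sub_head (x : Alpha) : ∃ s, sub x = Alpha.a :: s := by
  cases x
  · exact ⟨[.b], rfl⟩
  · exact ⟨[.c], rfl⟩
  · exact ⟨[], rfl⟩

lemma sig_prefix_strict {u v : List Alpha} (h : u <+: v) (hl : u.length < v.length) :
    sig u ++ [Alpha.a] <+: sig v := by
  obtain ⟨r, rfl⟩ := h
  match r with
  | [] => simp at hl
  | x :: t =>
    rw [sig_append]
    obtain ⟨s, hs⟩ := sub_head x
    refine ⟨s ++ sig t, ?_⟩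
    rw [sig_cons, hs]
    simp

/-! ### Main induction -/

lemma Q_prefix (m : ℕ) :
    Q m <+: T (m + 3) ∧ Q m <+: (T (m + 1) ++ T m ++ T (m + 1)) := by
  induction m with
  | zero => exact ⟨by decide, by decide⟩
  | succ m ih =>
    obtain ⟨hT, hW⟩ := ih
    have hlenQ := length_Q m
    have hWlen : (T (m + 1) ++ T m ++ T (m + 1)).length = 2 * trib (m + 3) + trib (m + 2) := by
      have l1 : (T (m + 1)).length = trib (m + 3) := length_T (m + 1)
      have l0 : (T m).length = trib (m + 2) := length_T m
      rw [List.length_append, List.length_append, l1, l0]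
      omega
    have hQW : (Q m).length < (T (m + 1) ++ T m ++ T (m + 1)).length := by
      have := ker_le_W m
      omega
    have hQT : (Q m).length < (T (m + 3)).length := by
      have lT : (T (m + 3)).length = trib (m + 5) := length_T (m + 3)
      have := ker_le_T m
      omega
    constructor
    · show sig (Q m) ++ [Alpha.a] <+: T (m + 4)
      rw [show T (m + 4) = sig (T (m + 3)) from T_succ (m + 3)]
      exact sig_prefix_strict hT hQT
    · show sig (Q m) ++ [Alpha.a] <+: (T (m + 2) ++ T (m + 1) ++ T (m + 2))
      rw [show T (m + 2) ++ T (m + 1) ++ T (m + 2) = sig (T (m + 1) ++ T m ++ T (m + 1)) by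
        rw [sig_append, sig_append, ← T_succ (m + 1), ← T_succ m]]
      exact sig_prefix_strict hW hQW

/-! ### Final theorem -/

/-- The prefix of length k_{m+6} − 2 of T_{m+3} equals the prefix of the same
length of T_{m+1} T_m T_{m+1}, for all m ≥ 0. -/
theorem prefix_Tm3_eq_prefix (m : ℕ) :
    (T (m + 3)).take (ker (m + 6) - 2) =
      (T (m + 1) ++ T m ++ T (m + 1)).take (ker (m + 6) - 2) := by
  obtain ⟨hT, hW⟩ := Q_prefix m
  have hlen : ker (m + 6) - 2 = (Q m).length := by
    have := length_Q m
    omega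
  rw [hlen, ← List.prefix_iff_eq_take.mp hT, ← List.prefix_iff_eq_take.mp hW]
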